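/- Let Λ be a connected, non-bipartite finite simple graph in which every vertex has degree at least 3. Then for any darts x, w, y, z of Λ there exist directed walks in the dart digraph D(Λ) from x to w and from y to z that have equal length. -/

import Mathlib

/-- `(x, y)` is a 2-dart of `Λ`: the terminal vertex of `x` equals the initial
vertex of `y`, and the initial vertex of `x` differs from the terminal vertex of `y`.
This is exactly the dart relation of the dart digraph `D(Λ)`. -/
def IsTwoDart {V : Type*} (Λ : SimpleGraph V) (x y : Λ.Dart) : Prop :=
  x.toProd.2 = y.toProd.1 ∧ x.toProd.1 ≠ y.toProd.2

namespace DartAux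

variable {V : Type*} {Λ : SimpleGraph V}

/-- Non-backtracking reachability in `n` steps in the dart digraph. -/
def Reach (Λ : SimpleGraph V) (u v : Λ.Dart) (n : ℕ) : Prop :=
  ∃ a : ℕ → Λ.Dart, a 0 = u ∧ a n = v ∧ ∀ i < n, IsTwoDart Λ (a i) (a (i + 1))

lemma reach_refl (u : Λ.Dart) : Reach Λ u u 0 :=
  ⟨fun _ => u, rfl, rfl, fun i hi => absurd hi (Nat.not_lt_zero i)⟩

lemma reach_step {u v : Λ.Dart} (h : IsTwoDart Λ u v) : Reach Λ u v 1 := by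
  refine ⟨fun i => if i = 0 then u else v, by simp, by simp, ?_⟩
  intro i hi
  interval_cases i
  simp only [show (1:ℕ) ≠ 0 from one_ne_zero, if_neg, if_pos rfl]
  simpa using h

lemma reach_trans {u v w : Λ.Dart} {n m : ℕ} (h1 : Reach Λ u v n) (h2 : Reach Λ v w m) :
    Reach Λ u w (n + m) := by
  obtain ⟨a, ha0, han, ha⟩ := h1
  obtain ⟨b, hb0, hbm, hb⟩ := h2
  refine ⟨fun i => if i ≤ n then a i else b (i - n), by simp [ha0], ?_, ?_⟩
  · by_cases h : m = 0
    · subst h; simpa [han, ← hb0, ← hbm] using han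
    · have : ¬ n + m ≤ n := by omega
      simp only [this, if_neg, if_false]
      rw [Nat.add_sub_cancel_left, hbm]
  · intro i hi
    by_cases h1i : i + 1 ≤ n
    · have : i ≤ n := by omega
      simp only [this, h1i, if_pos]
      exact ha i (by omega)
    · by_cases h2i : i ≤ n
      · have hin : i = n := by omega
        subst hin
        simp only [le_refl, if_pos, h1i, if_neg, if_false]
        rw [han, Nat.add_sub_cancel_left]
        rw [← hb0]
        have h0 := hb 0 (by omega)
        simpa using h0
      · simp only [h1i, h2i, if_neg]
        have : i + 1 - n = (i - n) + 1 := by omega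
        rw [this]
        exact hb (i - n) (by omega)

lemma exists_nbr [Fintype V] [DecidableRel Λ.Adj] (hdeg : ∀ v : V, 3 ≤ Λ.degree v)
    (v p q : V) : ∃ m, Λ.Adj v m ∧ m ≠ p ∧ m ≠ q := by
  classical
  by_contra h
  push_neg at h
  have hsub : Λ.neighborFinset v ⊆ {p, q} := by
    intro m hm
    rw [SimpleGraph.mem_neighborFinset] at hm
    have hmq := h m hm
    by_cases hmp : m = p
    · simp [hmp]
    · simp [hmq hmp]
  have hc := Finset.card_le_card hsub
  have h2 : ({p, q} : Finset V).card ≤ 2 := by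
    apply le_trans (Finset.card_insert_le _ _); simp
  have h3 := hdeg v
  rw [← SimpleGraph.card_neighborFinset_eq_degree] at h3
  omega

lemma exists_greedy [Fintype V] [DecidableRel Λ.Adj] (hdeg : ∀ v : V, 3 ≤ Λ.degree v)
    {a b : V} (hab : Λ.Adj a b) :
    ∃ f : ℕ → V, f 0 = b ∧ f 1 ≠ a ∧ (∀ k, Λ.Adj (f k) (f (k + 1))) ∧
      (∀ k, 1 ≤ k → f (k + 1) ≠ f (k - 1)) ∧ (∀ k, f k = a → f (k + 1) ≠ b) := by
  classical
  have step : ∀ pc : V × V, Λ.Adj pc.1 pc.2 →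
      ∃ m, Λ.Adj pc.2 m ∧ m ≠ pc.1 ∧ (pc.2 = a → m ≠ b) := by
    rintro ⟨p, c⟩ _
    obtain ⟨m, hm, h1, h2⟩ := exists_nbr hdeg c p (if c = a then b else p)
    refine ⟨m, hm, h1, fun hc => ?_⟩
    rw [if_pos hc] at h2
    exact h2
  have step' : ∀ pc : V × V, ∃ m, Λ.Adj pc.1 pc.2 →
      (Λ.Adj pc.2 m ∧ m ≠ pc.1 ∧ (pc.2 = a → m ≠ b)) := by
    intro pc
    by_cases h : Λ.Adj pc.1 pc.2
    · obtain ⟨m, hm⟩ := step pc h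
      exact ⟨m, fun _ => hm⟩
    · exact ⟨b, fun hh => absurd hh h⟩
  choose nxt hnxt using step'
  let g : ℕ → V × V := fun n => Nat.rec (a, b) (fun _ pc => (pc.2, nxt pc)) n
  have hg0 : g 0 = (a, b) := rfl
  have hgs : ∀ k, g (k + 1) = ((g k).2, nxt (g k)) := fun k => rfl
  have hadjg : ∀ k, Λ.Adj (g k).1 (g k).2 := by
    intro k
    induction k with
    | zero => exact hab
    | succ k ih =>
      rw [hgs k]
      exact (hnxt (g k) ih).1
  refine ⟨fun n => (g n).2, rfl, ?_, ?_, ?_, ?_⟩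
  · show (g 1).2 ≠ a
    rw [show (1:ℕ) = 0 + 1 from rfl, hgs 0]
    have := (hnxt (g 0) (hadjg 0)).2.1
    rw [hg0] at this
    exact this
  · intro k
    show Λ.Adj (g k).2 (g (k+1)).2
    rw [hgs k]
    exact (hnxt (g k) (hadjg k)).1
  · intro k hk
    obtain ⟨k, rfl⟩ := Nat.exists_eq_add_of_le hk
    have h1 : (g (1 + k)).1 = (g k).2 := by
      rw [show 1 + k = k + 1 from by omega, hgs k]
    show (g (1 + k + 1)).2 ≠ (g (1 + k - 1)).2
    have e : 1 + k - 1 = k := by omega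
    rw [e, show 1 + k + 1 = (1 + k) + 1 from rfl, hgs (1 + k)]
    have := (hnxt (g (1 + k)) (hadjg (1 + k))).2.1
    rw [h1] at this
    simpa using this
  · intro k hk
    show (g (k + 1)).2 ≠ b
    rw [hgs k]
    exact (hnxt (g k) (hadjg k)).2.2 hk

lemma rev [Fintype V] [DecidableRel Λ.Adj] (hdeg : ∀ v : V, 3 ≤ Λ.degree v)
    (d : Λ.Dart) : ∃ n, Reach Λ d d.symm n := by
  classical
  obtain ⟨f, hf0, hf1, hadjf, hnb, hav⟩ := exists_greedy hdeg d.adj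
  set a : V := d.toProd.1 with ha
  set b : V := d.toProd.2 with hb
  -- pigeonhole : some vertex repeats
  have hrep : ∃ j, ∃ i, i < j ∧ f i = f j := by
    obtain ⟨i, j, hne, heq⟩ := Finite.exists_ne_map_eq_of_infinite f
    rcases lt_or_gt_of_ne hne with h | h
    · exact ⟨j, i, h, heq⟩
    · exact ⟨i, j, h, heq.symm⟩
  set j₀ := Nat.find hrep with hj₀
  obtain ⟨i, hij, hfij⟩ := Nat.find_spec hrep
  have hinj : ∀ i' j', i' < j' → j' < j₀ → f i' ≠ f j' := by
    intro i' j' h1 h2 heq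
    exact Nat.find_min hrep h2 ⟨i', h1, heq⟩
  -- basic index facts
  have hj1 : i ≠ j₀ - 1 := by
    intro h
    have := (hadjf (j₀ - 1)).ne
    rw [show j₀ - 1 + 1 = j₀ from by omega] at this
    exact this (h ▸ hfij)
  have hj2 : j₀ ≥ 2 := by
    by_contra h
    push_neg at h
    have hi : i = 0 := by omega
    have hj : Nat.find hrep = 1 := by omega
    rw [hi, hj] at hfij
    exact (hadjf 0).ne hfij
  have hj3 : i ≠ j₀ - 2 := by
    intro h
    have := hnb (j₀ - 1) (by omega)
    rw [show j₀ - 1 + 1 = j₀ from by omega, show j₀ - 1 - 1 = j₀ - 2 from by omega] at this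
    exact this (hfij.symm.trans (by rw [h]))
  have hile : i ≤ j₀ - 3 := by omega
  -- darts along the walk
  set dk : ℕ → Λ.Dart := fun k => ⟨(f k, f (k + 1)), hadjf k⟩ with hdk
  have hnb2 : ∀ k, f k ≠ f (k + 2) := by
    intro k heq
    have := hnb (k + 1) (by omega)
    rw [show k + 1 + 1 = k + 2 from rfl, show k + 1 - 1 = k from by omega] at this
    exact this heq.symm
  -- forward ride
  have F : ∀ k, ∃ n, Reach Λ d (dk k) n := by
    intro k
    induction k with
    | zero =>
      refine ⟨1, reach_step ⟨?_, ?_⟩⟩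
      · exact hf0.symm
      · show a ≠ f 1
        exact fun h => hf1 h.symm
    | succ k ih =>
      obtain ⟨n, hn⟩ := ih
      refine ⟨n + 1, reach_trans hn (reach_step ⟨rfl, ?_⟩)⟩
      exact hnb2 k
  -- backward ride
  have B : ∀ k, ∃ n, Reach Λ ((dk k).symm) ((dk 0).symm) n := by
    intro k
    induction k with
    | zero => exact ⟨0, reach_refl _⟩
    | succ k ih =>
      obtain ⟨n, hn⟩ := ih
      refine ⟨1 + n, reach_trans (reach_step ⟨rfl, ?_⟩) hn⟩
      show f (k + 1 + 1) ≠ f k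
      exact fun h => hnb2 k h.symm
  -- final step home
  have END : IsTwoDart Λ ((dk 0).symm) d.symm := by
    constructor
    · show f 0 = b
      exact hf0
    · show f 1 ≠ a
      exact hf1
  rcases Nat.eq_zero_or_pos i with hi0 | hipos
  · -- cycle through b itself
    obtain ⟨n, hn⟩ := F (j₀ - 1)
    refine ⟨n + 1, reach_trans hn (reach_step ⟨?_, ?_⟩)⟩
    · show f (j₀ - 1 + 1) = b
      rw [show j₀ - 1 + 1 = j₀ from by omega, ← hfij, hi0, hf0]
    · show f (j₀ - 1) ≠ a
      intro h
      have := hav (j₀ - 1) h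
      rw [show j₀ - 1 + 1 = j₀ from by omega] at this
      exact this (by rw [← hfij, hi0, hf0])
  · -- cross over to the reversed tail
    obtain ⟨n1, hn1⟩ := F (j₀ - 1)
    obtain ⟨n2, hn2⟩ := B (i - 1)
    have CROSS : IsTwoDart Λ (dk (j₀ - 1)) ((dk (i - 1)).symm) := by
      constructor
      · show f (j₀ - 1 + 1) = f (i - 1 + 1)
        rw [show j₀ - 1 + 1 = j₀ from by omega, show i - 1 + 1 = i from by omega]
        exact hfij.symm
      · show f (j₀ - 1) ≠ f (i - 1)
        intro h
        exact hinj (i - 1) (j₀ - 1) (by omega) (by omega) h.symm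
    exact ⟨_,
      reach_trans (reach_trans (reach_trans hn1 (reach_step CROSS)) hn2) (reach_step END)⟩

lemma sim [Fintype V] [DecidableRel Λ.Adj] (hdeg : ∀ v : V, 3 ≤ Λ.degree v)
    {s t : V} (p : Λ.Walk s t) : ∀ (d : Λ.Dart), d.toProd.2 = s →
    ∃ n e, Reach Λ d e n ∧ (e : Λ.Dart).toProd.2 = t := by
  induction p with
  | nil => exact fun d h => ⟨0, d, reach_refl d, h⟩
  | @cons s s' t h p ih =>
    intro d hd
    by_cases hc : d.toProd.1 = s'
    · obtain ⟨n, hn⟩ := rev hdeg d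
      have hsymm : d.symm.toProd.2 = s' := hc
      obtain ⟨m, e, he, het⟩ := ih d.symm hsymm
      exact ⟨n + m, e, reach_trans hn he, het⟩
    · have step : IsTwoDart Λ d (⟨(s, s'), h⟩ : Λ.Dart) := ⟨hd, hc⟩
      obtain ⟨m, e, he, het⟩ := ih ⟨(s, s'), h⟩ rfl
      exact ⟨1 + m, e, reach_trans (reach_step step) he, het⟩

lemma sc [Fintype V] [DecidableRel Λ.Adj] (hconn : Λ.Connected)
    (hdeg : ∀ v : V, 3 ≤ Λ.degree v) (u v : Λ.Dart) : ∃ n, Reach Λ u v n := by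
  obtain ⟨p⟩ := hconn (u.toProd.2) (v.toProd.1)
  obtain ⟨n, e, he, het⟩ := sim hdeg (p.concat v.adj) u rfl
  by_cases hh : e.toProd.1 = v.toProd.1
  · have : e = v := SimpleGraph.Dart.ext _ _ (Prod.ext hh het)
    exact ⟨n, this ▸ he⟩
  · have step : IsTwoDart Λ e v.symm := ⟨het, hh⟩
    obtain ⟨m, hm⟩ := rev hdeg v.symm
    rw [SimpleGraph.Dart.symm_symm] at hm
    exact ⟨n + 1 + m, reach_trans (reach_trans he (reach_step step)) hm⟩

lemma odd_closed (hconn : Λ.Connected) (hnbip : ¬ Λ.Colorable 2) :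
    ∃ (d : Λ.Dart) (n : ℕ), Odd n ∧ Reach Λ d d n := by
  classical
  have hne : Nonempty V := hconn.nonempty
  obtain ⟨r⟩ := hne
  -- an edge whose endpoints have distances of equal parity from r
  have key : ∃ u v, Λ.Adj u v ∧ Λ.dist r u % 2 = Λ.dist r v % 2 := by
    by_contra h
    push_neg at h
    refine hnbip ⟨SimpleGraph.Coloring.mk
      (fun v => (⟨Λ.dist r v % 2, Nat.mod_lt _ two_pos⟩ : Fin 2)) ?_⟩
    intro u v huv hc
    exact h u v huv (congrArg Fin.val hc)
  obtain ⟨u, v, huv, hpar⟩ := key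
  obtain ⟨p, hp⟩ := hconn.exists_walk_length_eq_dist r u
  obtain ⟨q, hq⟩ := hconn.exists_walk_length_eq_dist r v
  set W : Λ.Walk r r := p.append (SimpleGraph.Walk.cons huv q.reverse) with hW
  have hWlen : W.length = p.length + q.length + 1 := by
    rw [hW, SimpleGraph.Walk.length_append, SimpleGraph.Walk.length_cons,
      SimpleGraph.Walk.length_reverse]
    omega
  have hWodd : Odd W.length := by
    rw [hWlen, hp, hq, Nat.odd_iff]
    omega
  -- minimal odd closed walk
  have hoc : ∃ n, Odd n ∧ ∃ g : ℕ → V, g 0 = g n ∧ ∀ i < n, Λ.Adj (g i) (g (i + 1)) := by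
    refine ⟨W.length, hWodd, W.getVert, ?_, fun i hi => W.adj_getVert_succ hi⟩
    rw [SimpleGraph.Walk.getVert_zero, SimpleGraph.Walk.getVert_length]
  set n₀ := Nat.find hoc with hn₀
  obtain ⟨hodd₀, g, hg0, hadjg⟩ := Nat.find_spec hoc
  rw [← hn₀] at hodd₀ hg0 hadjg
  have hpos : 1 ≤ n₀ := by
    rcases hodd₀ with ⟨k, hk⟩; omega
  have hne1 : n₀ ≠ 1 := by
    intro h
    exact (hadjg 0 (by omega)).ne (by rw [show 0 + 1 = n₀ from by omega]; exact hg0)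
  have h3 : 3 ≤ n₀ := by
    rcases hodd₀ with ⟨k, hk⟩
    rcases Nat.eq_zero_or_pos k with h | h <;> omega
  -- injectivity of g on [0, n₀) (with the wrap identification)
  have inj : ∀ i j, i < j → j ≤ n₀ → ¬(i = 0 ∧ j = n₀) → g i ≠ g j := by
    intro i j hij hjn hnotend heq
    set l1 := j - i with hl1
    set l2 := n₀ - j + i with hl2
    have hsum : l1 + l2 = n₀ := by omega
    have hl1pos : 1 ≤ l1 := by omega
    have hl1lt : l1 < n₀ := by omega
    have hl2lt : l2 < n₀ := by omega
    have w1 : ∃ gg : ℕ → V, gg 0 = gg l1 ∧ ∀ k < l1, Λ.Adj (gg k) (gg (k + 1)) := by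
      refine ⟨fun k => g (i + k), ?_, ?_⟩
      · show g (i + 0) = g (i + l1)
        rw [Nat.add_zero, show i + l1 = j from by omega]
        exact heq
      intro k hk
      have := hadjg (i + k) (by omega)
      rwa [show i + k + 1 = i + (k + 1) from by omega] at this
    have w2 : ∃ gg : ℕ → V, gg 0 = gg l2 ∧ ∀ k < l2, Λ.Adj (gg k) (gg (k + 1)) := by
      refine ⟨fun k => if k ≤ n₀ - j then g (j + k) else g (k - (n₀ - j)), ?_, ?_⟩
      · simp only [Nat.zero_le, if_pos, Nat.add_zero]
        rcases Nat.eq_zero_or_pos i with hi0 | hip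
        · have : l2 ≤ n₀ - j := by omega
          simp only [this, if_pos]
          rw [show j + l2 = n₀ from by omega, ← hg0, ← heq, hi0]
        · have : ¬ l2 ≤ n₀ - j := by omega
          simp only [this, if_neg, if_false]
          rw [show l2 - (n₀ - j) = i from by omega, heq]
      · intro k hk
        rcases Nat.lt_trichotomy k (n₀ - j) with h | h | h
        · have h1 : k ≤ n₀ - j := by omega
          have h2 : k + 1 ≤ n₀ - j := by omega
          simp only [h1, h2, if_pos]
          exact hadjg (j + k) (by omega)
        · have h1 : k ≤ n₀ - j := by omega
          have h2 : ¬ (k + 1 ≤ n₀ - j) := by omega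
          simp only [h1, if_pos, h2, if_neg, if_false]
          rw [show j + k = n₀ from by omega, show k + 1 - (n₀ - j) = 1 from by omega, ← hg0]
          exact hadjg 0 (by omega)
        · have h1 : ¬ (k ≤ n₀ - j) := by omega
          have h2 : ¬ (k + 1 ≤ n₀ - j) := by omega
          simp only [h1, h2, if_neg, if_false]
          rw [show k + 1 - (n₀ - j) = k - (n₀ - j) + 1 from by omega]
          exact hadjg (k - (n₀ - j)) (by omega)
    rcases Nat.even_or_odd l1 with he1 | ho1
    · have ho2 : Odd l2 := by
        rcases hodd₀ with ⟨a, hA⟩; rcases he1 with ⟨b, hB⟩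
        exact ⟨a - b, by omega⟩
      exact Nat.find_min hoc hl2lt ⟨ho2, w2⟩
    · exact Nat.find_min hoc hl1lt ⟨ho1, w1⟩
  -- build the closed dart walk
  have hd0 : Λ.Adj (g 0) (g 1) := hadjg 0 (by omega)
  set dstar : Λ.Dart := ⟨(g 0, g 1), hd0⟩ with hdstar
  refine ⟨dstar, n₀, hodd₀, ?_⟩
  refine ⟨fun k => if h : k < n₀ then ⟨(g k, g (k + 1)), hadjg k h⟩ else dstar, ?_, ?_, ?_⟩
  · simp only [dif_pos (show 0 < n₀ from by omega)]
    rfl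
  · simp only [lt_irrefl, dif_neg, not_false_iff]
  · intro i hi
    rcases Nat.lt_or_ge (i + 1) n₀ with h | h
    · simp only [dif_pos hi, dif_pos h]
      constructor
      · rfl
      · show g i ≠ g (i + 2)
        refine inj i (i + 2) (by omega) (by omega) ?_
        rintro ⟨hi0, hin⟩
        rcases hodd₀ with ⟨a, hA⟩
        omega
    · have hie : i + 1 = n₀ := by omega
      simp only [dif_pos hi, dif_neg (show ¬ (i + 1 < n₀) from by omega)]
      constructor
      · show g (i + 1) = g 0
        rw [hie, ← hg0]
      · show g i ≠ g 1
        intro hh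
        exact inj 1 i (by omega) (by omega) (by omega) hh.symm

lemma nt {S : ℕ → Prop} (hadd : ∀ m n, S m → S n → S (m + n)) {P o : ℕ}
    (hP : S P) (hP2 : S (P + 2)) (ho : S o) (hoodd : o % 2 = 1) (hPpos : 2 ≤ P) :
    ∀ n, P * P + P + o ≤ n → S n := by
  have combo : ∀ c, 1 ≤ c → ∀ b, b ≤ c → S (c * P + 2 * b) := by
    intro c hc
    induction c, hc using Nat.le_induction with
    | base =>
      intro b hb
      interval_cases b
      · simpa using hP
      · have e : 1 * P + 2 * 1 = P + 2 := by ring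
        rw [e]; exact hP2
    | succ c hc ih =>
      intro b hb
      rcases Nat.lt_or_ge b (c + 1) with h | h
      · have := hadd _ _ (ih b (by omega)) hP
        have e : c * P + 2 * b + P = (c + 1) * P + 2 * b := by ring
        rwa [e] at this
      · have hb1 : b = c + 1 := by omega
        subst hb1
        have := hadd _ _ (ih c le_rfl) hP2
        have e : c * P + 2 * c + (P + 2) = (c + 1) * P + 2 * (c + 1) := by ring
        rwa [e] at this
  -- decomposition helper
  have decomp : ∀ m, P * P + P ≤ m → ∃ c X, m = P * c + X ∧ X < P ∧ P + 1 ≤ c := by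
    intro m hm
    refine ⟨m / P, m % P, by rw [Nat.div_add_mod], Nat.mod_lt _ (by omega), ?_⟩
    rw [Nat.le_div_iff_mul_le (show 0 < P by omega)]
    have e : (P + 1) * P = P * P + P := by ring
    linarith
  have hA : ∀ c X, P + 1 ≤ c → X < P → X % 2 = 0 → S (P * c + X) := by
    intro c X hc hX hX2
    have h2b : 2 * (X / 2) = X := by omega
    have hbc : X / 2 ≤ c := by omega
    have := combo c (by omega) (X / 2) hbc
    have e : c * P + 2 * (X / 2) = P * c + X := by rw [mul_comm, h2b]
    rwa [e] at this
  intro n hn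
  obtain ⟨c, X, hcd, hX, hc⟩ := decomp n (by omega)
  rcases Nat.even_or_odd X with hXe | hXo
  · rw [hcd]
    exact hA c X hc hX (Nat.even_iff.mp hXe)
  · have hXo' : X % 2 = 1 := Nat.odd_iff.mp hXo
    rcases Nat.even_or_odd P with hPe | hPo
    · -- P even, X odd : n is odd; use n - o
      have hPe' : P % 2 = 0 := Nat.even_iff.mp hPe
      have hon : o ≤ n := by omega
      have hm : P * P + P ≤ n - o := by omega
      obtain ⟨c₂, X₂, hcd₂, hX₂, hc₂⟩ := decomp (n - o) hm
      have hpcmod : P * c % 2 = 0 := by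
        rw [Nat.mul_mod, hPe']; simp
      have hpc2mod : P * c₂ % 2 = 0 := by
        rw [Nat.mul_mod, hPe']; simp
      have hX₂e : X₂ % 2 = 0 := by
        have h1 : n % 2 = 1 := by
          rw [hcd]
          generalize P * c = Q at hpcmod ⊢
          omega
        have h2 : (n - o) % 2 = 0 := by omega
        rw [hcd₂] at h2
        generalize P * c₂ = Q at hpc2mod h2
        omega
      have hS1 := hA c₂ X₂ hc₂ hX₂ hX₂e
      have := hadd _ _ hS1 ho
      rw [← hcd₂] at this
      rwa [show n - o + o = n from by omega] at this
    · -- P odd : shift c down by one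
      have hPo' : P % 2 = 1 := Nat.odd_iff.mp hPo
      obtain ⟨c', rfl⟩ : ∃ c', c = c' + 1 := ⟨c - 1, by omega⟩
      have h2b : 2 * ((X + P) / 2) = X + P := by omega
      have hbc : (X + P) / 2 ≤ c' := by omega
      have := combo c' (by omega) ((X + P) / 2) hbc
      have e : c' * P + 2 * ((X + P) / 2) = P * (c' + 1) + X := by
        rw [h2b]; ring
      rw [e] at this
      rwa [hcd]

lemma pad [Fintype V] [DecidableRel Λ.Adj] (hconn : Λ.Connected)
    (hnbip : ¬ Λ.Colorable 2) (hdeg : ∀ v : V, 3 ≤ Λ.degree v) (u : Λ.Dart) :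
    ∃ N, ∀ n, N ≤ n → Reach Λ u u n := by
  classical
  set S : ℕ → Prop := fun n => Reach Λ u u n with hS
  have hadd : ∀ m n, S m → S n → S (m + n) := fun m n h1 h2 => reach_trans h1 h2
  -- an odd element of S
  obtain ⟨dstar, nodd, hnodd, hreach⟩ := odd_closed hconn hnbip
  obtain ⟨p, hp⟩ := sc hconn hdeg u dstar
  obtain ⟨q, hq⟩ := sc hconn hdeg dstar u
  have hE : S (p + q) := reach_trans hp hq
  have hF : S (p + nodd + q) := reach_trans (reach_trans hp hreach) hq
  have hoex : ∃ o, S o ∧ o % 2 = 1 := by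
    rcases Nat.even_or_odd (p + q) with h | h
    · refine ⟨p + nodd + q, hF, ?_⟩
      have h1 := Nat.even_iff.mp h
      have h2 := Nat.odd_iff.mp hnodd
      omega
    · exact ⟨p + q, hE, Nat.odd_iff.mp h⟩
  obtain ⟨o, hSo, hoodd⟩ := hoex
  -- elements P and P+2 of S
  set a : V := u.toProd.1 with ha
  set b : V := u.toProd.2 with hb
  obtain ⟨c, hbc, hca, -⟩ := exists_nbr hdeg b a a
  obtain ⟨m, hbm, hma, hmc⟩ := exists_nbr hdeg b a c
  obtain ⟨z, hcz, hzb, -⟩ := exists_nbr hdeg c b b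
  obtain ⟨y, hcy, hyb, hyz⟩ := exists_nbr hdeg c b z
  set dbc : Λ.Dart := ⟨(b, c), hbc⟩
  set dcy : Λ.Dart := ⟨(c, y), hcy⟩
  set dzc : Λ.Dart := ⟨(z, c), hcz.symm⟩
  set dcb : Λ.Dart := ⟨(c, b), hbc.symm⟩
  set dbm : Λ.Dart := ⟨(b, m), hbm⟩
  have s1 : IsTwoDart Λ u dbc := ⟨rfl, show a ≠ c from fun h => hca h.symm⟩
  have s2 : IsTwoDart Λ dbc dcy := ⟨rfl, show b ≠ y from fun h => hyb h.symm⟩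
  have s3 : IsTwoDart Λ dzc dcy := ⟨rfl, show z ≠ y from fun h => hyz h.symm⟩
  have s4 : IsTwoDart Λ dzc dcb := ⟨rfl, show z ≠ b from hzb⟩
  have s5 : IsTwoDart Λ dcb dbm := ⟨rfl, show c ≠ m from fun h => hmc h.symm⟩
  have s6 : IsTwoDart Λ u dbm := ⟨rfl, show a ≠ m from fun h => hma h.symm⟩
  obtain ⟨s, hs⟩ := sc hconn hdeg u dzc
  obtain ⟨r, hr⟩ := sc hconn hdeg dcy u
  obtain ⟨r', hr'⟩ := sc hconn hdeg dbm u
  -- A = 2 + r ∈ S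
  have hAmem : S (1 + 1 + r) :=
    reach_trans (reach_trans (reach_step s1) (reach_step s2)) hr
  have hBmem : S (s + 1 + r) :=
    reach_trans (reach_trans hs (reach_step s3)) hr
  have hCmem : S (1 + r') := reach_trans (reach_step s6) hr'
  have hDmem : S (s + 1 + 1 + r') :=
    reach_trans (reach_trans (reach_trans hs (reach_step s4)) (reach_step s5)) hr'
  set P : ℕ := (s + 1 + r) + (1 + r') with hPdef
  have hPS : S P := hadd _ _ hBmem hCmem
  have hP2S : S (P + 2) := by
    have := hadd _ _ hAmem hDmem
    rwa [show (1 + 1 + r) + (s + 1 + 1 + r') = P + 2 from by omega] at this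
  have hPge : 2 ≤ P := by omega
  exact ⟨P * P + P + o, fun n hn => nt hadd hPS hP2S hSo hoodd hPge n hn⟩

end DartAux

/-- If `Λ` is a connected, non-bipartite finite simple graph of minimum degree
at least 3, then for any darts `x, w, y, z` of `Λ` there are directed walks in
the dart digraph `D(Λ)` from `x` to `w` and from `y` to `z` of equal length. -/
theorem dartDigraph_equal_length_walks {V : Type*} [Fintype V]
    (Λ : SimpleGraph V) [DecidableRel Λ.Adj] (hconn : Λ.Connected)
    (hnbip : ¬ Λ.Colorable 2) (hdeg : ∀ v : V, 3 ≤ Λ.degree v)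
    (x w y z : Λ.Dart) :
    ∃ (k : ℕ) (a b : ℕ → Λ.Dart),
      a 0 = x ∧ a k = w ∧ (∀ i < k, IsTwoDart Λ (a i) (a (i + 1))) ∧
      b 0 = y ∧ b k = z ∧ (∀ i < k, IsTwoDart Λ (b i) (b (i + 1))) := by
  classical
  obtain ⟨p, hp⟩ := DartAux.sc hconn hdeg x w
  obtain ⟨q, hq⟩ := DartAux.sc hconn hdeg y z
  obtain ⟨Nw, hNw⟩ := DartAux.pad hconn hnbip hdeg w
  obtain ⟨Nz, hNz⟩ := DartAux.pad hconn hnbip hdeg z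
  set k := p + q + Nw + Nz with hk
  have h1 : DartAux.Reach Λ x w k := by
    have := DartAux.reach_trans hp (hNw (q + Nw + Nz) (by omega))
    rwa [show p + (q + Nw + Nz) = k from by omega] at this
  have h2 : DartAux.Reach Λ y z k := by
    have := DartAux.reach_trans hq (hNz (p + Nw + Nz) (by omega))
    rwa [show q + (p + Nw + Nz) = k from by omega] at this
  obtain ⟨A, hA0, hAk, hAs⟩ := h1
  obtain ⟨B, hB0, hBk, hBs⟩ := h2
  exact ⟨k, A, B, hA0, hAk, hAs, hB0, hBk, hBs⟩
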